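/- Let w ∈ W̃_{D_m} and 0 ≤ k ≤ m, and suppose w satisfies (SP1') and (SP3') at k. Let α̃ := α̃_{i,j;d} be an affine root (j ∉ {i, i*}) such that s_{α̃}w satisfies (SP1') at k. Suppose that s_{α̃}w fails (SP3') at k and that ⟨α̃, a_k⟩ ∈ ℤ. Then ν_k^w ∈ ℤ^{2m}, ⟨α̃, a_k⟩ = ±1, ν_k^w(i) = ν_k^w(j) = 1, and c_k^w ≢ q (mod 2). -/

import Mathlib

open Finset

namespace TypeD

abbrev VecZ (m : ℕ) := Fin (2 * m) → ℤ
abbrev VecR (m : ℕ) := Fin (2 * m) → ℝ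

/-- `σ ∈ S_{2m}^∘`: even, and commuting with `j ↦ j*`. -/
def InSO (m : ℕ) (σ : Equiv.Perm (Fin (2 * m))) : Prop :=
  Equiv.Perm.sign σ = 1 ∧ ∀ j, σ j.rev = (σ j).rev

/-- `t ∈ X_{*D_m}`. -/
def InXD (m : ℕ) (t : VecZ m) : Prop :=
  ∀ j j' : Fin (2 * m), t j + t j.rev = t j' + t j'.rev

/-- `ω_i ∈ ℤ^{2m}`: writing `i = 2m·b + c` with `0 ≤ c < 2m`, the first `c` entries
are `-b-1` and the rest are `-b`. -/
def omegaD (m : ℕ) (i : ℤ) (j : Fin (2 * m)) : ℤ :=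
  if ((j : ℕ) : ℤ) < i % (2 * (m : ℤ)) then -(i / (2 * (m : ℤ))) - 1
  else -(i / (2 * (m : ℤ)))

/-- `μ_k^w = w·ω_k − ω_k` for `w = t_t σ`. -/
def muD (m : ℕ) (t : VecZ m) (σ : Equiv.Perm (Fin (2 * m))) (k : ℤ) (j : Fin (2 * m)) : ℤ :=
  t j + omegaD m k (σ⁻¹ j) - omegaD m k j

/-- `ν_k^w = (μ_k^w + μ_{−k}^w)/2`, real-valued. -/
noncomputable def nuD (m : ℕ) (t : VecZ m) (σ : Equiv.Perm (Fin (2 * m))) (k : ℤ) (j : Fin (2 * m)) : ℝ :=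
  ((muD m t σ k j + muD m t σ (-k) j : ℤ) : ℝ) / 2

/-- `c_k^w = #{j : μ_k^w(j) = 2}`. -/
noncomputable def cD (m : ℕ) (t : VecZ m) (σ : Equiv.Perm (Fin (2 * m))) (k : ℤ) : ℕ :=
  Set.ncard {j : Fin (2 * m) | muD m t σ k j = 2}

/-- the cocharacter `μ = (2^{(q)}, 1^{(2m−2q)}, 0^{(q)})`. -/
def muQ (m q : ℕ) (j : Fin (2 * m)) : ℤ :=
  if (j : ℕ) < q then 2 else if (j : ℕ) < 2 * m - q then 1 else 0

/-- the coroot lattice `Q∨_{D_m}`. -/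
def QveeD (m : ℕ) : Set (VecZ m) :=
  {x | (∀ j, x j + x j.rev = 0) ∧
    Even (∑ j ∈ Finset.univ.filter (fun j : Fin (2 * m) => (j : ℕ) < m), x j)}

/-- `j ∈ A_a` (1-indexed `{1,…,a} ∪ {2m+1−a,…,2m}`). -/
def memA (m a : ℕ) (j : Fin (2 * m)) : Prop := (j : ℕ) < a ∨ 2 * m - a ≤ (j : ℕ)

/-- `j ∈ B_a` (1-indexed `{a+1,…,2m−a}`). -/
def memB (m a : ℕ) (j : Fin (2 * m)) : Prop := a ≤ (j : ℕ) ∧ (j : ℕ) < 2 * m - a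

def IsIntVal (x : ℝ) : Prop := ∃ z : ℤ, x = (z : ℝ)

/-- a half-integer: an element of `(1/2)ℤ ∖ ℤ`. -/
def IsHalfInt (x : ℝ) : Prop := (∃ z : ℤ, x = (z : ℝ) / 2) ∧ ¬ IsIntVal x

/-- `μ_k^w` is self-dual, i.e. `μ_k^w = μ_{−k}^w`. -/
def SelfDual (m : ℕ) (t : VecZ m) (σ : Equiv.Perm (Fin (2 * m))) (k : ℤ) : Prop :=
  ∀ j, muD m t σ k j = muD m t σ (-k) j

/-- (SP1) at `k`. -/
def SP1 (m : ℕ) (t : VecZ m) (σ : Equiv.Perm (Fin (2 * m))) (k : ℤ) : Prop :=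
  (∀ j, muD m t σ k j + muD m t σ (-k) j.rev = 2) ∧
  (∀ j, 0 ≤ muD m t σ k j ∧ muD m t σ k j ≤ 2)

/-- (SP2) at `k`. -/
def SP2 (m q : ℕ) (t : VecZ m) (σ : Equiv.Perm (Fin (2 * m))) (k : ℤ) : Prop :=
  cD m t σ k ≤ q

/-- (SP3) at `k`. -/
def SP3 (m q : ℕ) (t : VecZ m) (σ : Equiv.Perm (Fin (2 * m))) (k : ℕ) : Prop :=
  (SelfDual m t σ (k : ℤ) ∧ (fun j => muD m t σ (k : ℤ) j - muQ m q j) ∉ QveeD m) →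
    ∃ j₁ j₂ : Fin (2 * m), memA m k j₁ ∧ memB m k j₂ ∧
      muD m t σ (k : ℤ) j₁ = 1 ∧ muD m t σ (k : ℤ) j₂ = 1

/-- (SP1') at `k`. -/
def SP1' (m : ℕ) (t : VecZ m) (σ : Equiv.Perm (Fin (2 * m))) (k : ℤ) : Prop :=
  (∀ j, nuD m t σ k j + nuD m t σ k j.rev = 2) ∧
  (∀ j, 0 ≤ nuD m t σ k j ∧ nuD m t σ k j ≤ 2)

/-- (SP2') at `k`. -/
def SP2' (m q : ℕ) (t : VecZ m) (σ : Equiv.Perm (Fin (2 * m))) (k : ℤ) : Prop :=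
  (Set.ncard {j : Fin (2 * m) | nuD m t σ k j = 2} : ℝ) +
    (Set.ncard {j : Fin (2 * m) | ¬ IsIntVal (nuD m t σ k j)} : ℝ) / 4 ≤ (q : ℝ)

/-- `ν_k^w − μ ∈ Q∨_{D_m}`. -/
def NuCongQvee (m q : ℕ) (t : VecZ m) (σ : Equiv.Perm (Fin (2 * m))) (k : ℤ) : Prop :=
  ∃ y ∈ QveeD m, ∀ j, nuD m t σ k j = ((muQ m q j + y j : ℤ) : ℝ)

/-- (SP3') at `k`. -/
def SP3' (m q : ℕ) (t : VecZ m) (σ : Equiv.Perm (Fin (2 * m))) (k : ℕ) : Prop :=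
  ((∀ j, IsIntVal (nuD m t σ (k : ℤ) j)) ∧ ¬ NuCongQvee m q t σ (k : ℤ)) →
    ∃ j₁ j₂ : Fin (2 * m), memA m k j₁ ∧ memB m k j₂ ∧
      nuD m t σ (k : ℤ) j₁ = 1 ∧ nuD m t σ (k : ℤ) j₂ = 1

/-- the orbit `S_{2m}^∘ · μ` inside `ℝ^{2m}`. -/
def OrbitMu (m q : ℕ) : Set (VecR m) :=
  {x | ∃ σ : Equiv.Perm (Fin (2 * m)), InSO m σ ∧ ∀ j, x j = ((muQ m q (σ⁻¹ j) : ℤ) : ℝ)}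

/-- `Conv(S_{2m}^∘ · μ)`. -/
def ConvMu (m q : ℕ) : Set (VecR m) := convexHull ℝ (OrbitMu m q)

/-- the affine action of `w = t_t σ` on `ℝ^{2m}`. -/
noncomputable def actR (m : ℕ) (t : VecZ m) (σ : Equiv.Perm (Fin (2 * m))) (x : VecR m) (j : Fin (2 * m)) : ℝ :=
  (t j : ℝ) + x (σ⁻¹ j)

/-- the point `a_k = ((−1/2)^{(k)}, 0^{(2m−2k)}, (1/2)^{(k)})`. -/
noncomputable def aD (m k : ℕ) (j : Fin (2 * m)) : ℝ :=
  if (j : ℕ) < k then -(1 / 2) else if (j : ℕ) < 2 * m - k then 0 else 1 / 2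

/-- the point `a_{0'} = (−1, 0^{(2m−2)}, 1)`. -/
noncomputable def a0' (m : ℕ) (j : Fin (2 * m)) : ℝ :=
  if (j : ℕ) = 0 then -1 else if (j : ℕ) = 2 * m - 1 then 1 else 0

/-- the point `a_{m'} = ((−1/2)^{(m−1)}, 1/2, −1/2, (1/2)^{(m−1)})`. -/
noncomputable def am' (m : ℕ) (j : Fin (2 * m)) : ℝ :=
  if (j : ℕ) < m - 1 then -(1 / 2)
  else if (j : ℕ) = m - 1 then 1 / 2
  else if (j : ℕ) = m then -(1 / 2)
  else 1 / 2

/-- `ν_{0'}^w = w·a_{0'} − a_{0'}`. -/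
noncomputable def nu0' (m : ℕ) (t : VecZ m) (σ : Equiv.Perm (Fin (2 * m))) (j : Fin (2 * m)) : ℝ :=
  actR m t σ (a0' m) j - a0' m j

/-- `ν_{m'}^w = w·a_{m'} − a_{m'}`. -/
noncomputable def num' (m : ℕ) (t : VecZ m) (σ : Equiv.Perm (Fin (2 * m))) (j : Fin (2 * m)) : ℝ :=
  actR m t σ (am' m) j - am' m j

/-- membership in the real apartment `{x : x(1)+x(2m) = ⋯ = x(m)+x(m+1)}`. -/
def InApartR (m : ℕ) (x : VecR m) : Prop :=
  ∀ j j' : Fin (2 * m), x j + x j.rev = x j' + x j'.rev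

/-- membership in the base alcove `A_{D_m}`. -/
def InAlcove (m : ℕ) (x : VecR m) : Prop :=
  InApartR m x ∧
  (∀ j0 jt : Fin (2 * m), (j0 : ℕ) = 0 → 1 ≤ (jt : ℕ) → (jt : ℕ) ≤ m →
    x j0 < x jt ∧ x j0.rev - 1 < x jt) ∧
  (∀ j j' : Fin (2 * m), 1 ≤ (j : ℕ) → (j : ℕ) ≤ m - 2 → (j : ℕ) < (j' : ℕ) →
    (j' : ℕ) ≤ m → x j < x j')

/-- `w = t_t σ` is μ-permissible: `w ≡ t_μ mod W_{aff}` (equivalently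
`ν_0^w − μ ∈ Q∨_{D_m}`) and `w·x − x ∈ Conv(S_{2m}^∘ μ)` for all `x` in the base alcove. -/
def MuPermissible (m q : ℕ) (t : VecZ m) (σ : Equiv.Perm (Fin (2 * m))) : Prop :=
  NuCongQvee m q t σ 0 ∧
  ∀ x : VecR m, InAlcove m x → (fun j => actR m t σ x j - x j) ∈ ConvMu m q

/-- the coroot `α∨_{i,j} = e_i − e_j + e_{j*} − e_{i*}`. -/
def corootD (m : ℕ) (i j l : Fin (2 * m)) : ℤ :=
  (if l = i then 1 else 0) - (if l = j then 1 else 0) +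
    (if l = j.rev then 1 else 0) - (if l = i.rev then 1 else 0)

/-- `(t', σ')` represents `s_{α̃_{i,j;d}} · w` for `w = t_t σ`: on the apartment it
acts by `x ↦ w·x − ⟨α̃_{i,j;d}, w·x⟩ α∨_{i,j}`. -/
def IsReflOf (m : ℕ) (i j : Fin (2 * m)) (d : ℤ) (t : VecZ m) (σ : Equiv.Perm (Fin (2 * m)))
    (t' : VecZ m) (σ' : Equiv.Perm (Fin (2 * m))) : Prop :=
  ∀ x : VecR m, InApartR m x → ∀ l,
    actR m t' σ' x l =
      actR m t σ x l - (actR m t σ x i - actR m t σ x j - (d : ℝ)) * (corootD m i j l : ℝ)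

/-- Membership of `i` in `2mℤ ± I`. -/
def FaceIdxD (m : ℕ) (I : Finset ℕ) (i : ℤ) : Prop :=
  ∃ a ∈ I, ∃ b : ℤ, i = 2 * (m : ℤ) * b + (a : ℤ) ∨ i = 2 * (m : ℤ) * b - (a : ℤ)

/-- `v` is a `d`-face of type `(2m, I)`. -/
structure IsFaceD (m : ℕ) (I : Finset ℕ) (d : ℤ) (v : ℤ → VecZ m) : Prop where
  per : ∀ i, FaceIdxD m I i → ∀ j, v (i + 2 * (m : ℤ)) j = v i j - 1
  mono : ∀ i i', FaceIdxD m I i → FaceIdxD m I i' → i ≤ i' → ∀ j, v i' j ≤ v i j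
  sumEq : ∀ i i', FaceIdxD m I i → FaceIdxD m I i' → (∑ j, v i j) - (∑ j, v i' j) = i' - i
  dual : ∀ i, FaceIdxD m I i → ∀ j, v i j + v (-i) j.rev = d

/-- `μ_i^v := v_i − ω_i` for a face `v`. -/
def muFaceD (m : ℕ) (v : ℤ → VecZ m) (i : ℤ) (j : Fin (2 * m)) : ℤ := v i j - omegaD m i j

/-- `ε` of a translation vector: the sum of the first `m` entries mod 2. -/
def epsVec (m : ℕ) (x : VecZ m) : ZMod 2 :=
  ((∑ j ∈ Finset.univ.filter (fun j : Fin (2 * m) => (j : ℕ) < m), x j : ℤ) : ZMod 2)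

/-- membership of `(v, γ)` in `F_{I,D_m}`. -/
def MemFD (m : ℕ) (I : Finset ℕ) (v : ℤ → VecZ m) (γ : ZMod 2) : Prop :=
  (∃ d, IsFaceD m I d v) ∧
  (if 0 ∈ I then
    if m ∈ I then
      (fun j => muFaceD m v 0 j - muFaceD m v (m : ℤ) j) ∈ QveeD m ∧
        γ = epsVec m (fun j => muFaceD m v 0 j)
    else γ = epsVec m (fun j => muFaceD m v 0 j)
  else if m ∈ I then γ = epsVec m (fun j => muFaceD m v (m : ℤ) j)
  else True)

/-- membership of `t_tx σx` in `W_{I,D_m}` (the group conditions on `(tx, σx)` being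
assumed separately): it lies in `W_{aff,D_m}` and fixes `a_k` for all `k ∈ I`. -/
def MemWI (m : ℕ) (I : Finset ℕ) (tx : VecZ m) (σx : Equiv.Perm (Fin (2 * m))) : Prop :=
  tx ∈ QveeD m ∧ ∀ k ∈ I, ∀ j, (tx j : ℝ) + aD m k (σx⁻¹ j) = aD m k j

/-- (SP1) at `k` for a face. -/
def SP1F (m : ℕ) (v : ℤ → VecZ m) (k : ℕ) : Prop :=
  (∀ j, muFaceD m v (k : ℤ) j + muFaceD m v (-(k : ℤ)) j.rev = 2) ∧
  (∀ j, 0 ≤ muFaceD m v (k : ℤ) j ∧ muFaceD m v (k : ℤ) j ≤ 2)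

/-- (SP2) at `k` for a face. -/
def SP2F (m q : ℕ) (v : ℤ → VecZ m) (k : ℕ) : Prop :=
  Set.ncard {j : Fin (2 * m) | muFaceD m v (k : ℤ) j = 2} ≤ q

/-- (SP3) at `k` for a face. -/
def SP3F (m q : ℕ) (v : ℤ → VecZ m) (k : ℕ) : Prop :=
  ((∀ j, muFaceD m v (k : ℤ) j = muFaceD m v (-(k : ℤ)) j) ∧
      (fun j => muFaceD m v (k : ℤ) j - muQ m q j) ∉ QveeD m) →
    ∃ j₁ j₂ : Fin (2 * m), memA m k j₁ ∧ memB m k j₂ ∧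
      muFaceD m v (k : ℤ) j₁ = 1 ∧ muFaceD m v (k : ℤ) j₂ = 1

/-- `(v, γ) ∈ F_{I,D_m}` is μ-spin-permissible. -/
def SpinPermF (m q : ℕ) (I : Finset ℕ) (v : ℤ → VecZ m) (γ : ZMod 2) : Prop :=
  γ = epsVec m (fun j => muQ m q j) ∧ ∀ k ∈ I, SP1F m v k ∧ SP2F m q v k ∧ SP3F m q v k


section Helpers

variable {m : ℕ}

lemma rev_ne_self (x : Fin (2*m)) : x.rev ≠ x := by
  intro h
  have h1 := Fin.val_rev x
  rw [h] at h1
  have := x.isLt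
  omega

lemma omegaD_of_lt {k : ℕ} (hk : k < 2*m) (x : Fin (2*m)) :
    omegaD m (k:ℤ) x = if (x:ℕ) < k then -1 else 0 := by
  have h1 : (k:ℤ) % (2*(m:ℤ)) = k := Int.emod_eq_of_lt (by positivity) (by exact_mod_cast hk)
  have h2 : (k:ℤ) / (2*(m:ℤ)) = 0 := Int.ediv_eq_zero_of_lt (by positivity) (by exact_mod_cast hk)
  simp only [omegaD, h1, h2]
  split_ifs <;> omega

lemma omegaD_of_neg {k : ℕ} (hk : k < 2*m) (x : Fin (2*m)) :
    omegaD m (-(k:ℤ)) x = if (x:ℕ) < 2*m - k then 0 else 1 := by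
  have hx := x.isLt
  rcases Nat.eq_zero_or_pos k with h0 | hpos
  · subst h0
    have h1 : (-((0:ℕ):ℤ)) % (2*(m:ℤ)) = 0 := by simp
    have h2 : (-((0:ℕ):ℤ)) / (2*(m:ℤ)) = 0 := by simp
    simp only [omegaD, h1, h2]
    split_ifs <;> omega
  · have hmne : (2*(m:ℤ)) ≠ 0 := by omega
    have he : (-(k:ℤ)) = ((2*m - k : ℕ) : ℤ) + (2*(m:ℤ)) * (-1) := by
      push_cast [Nat.cast_sub hk.le]; ring
    have h1 : (-(k:ℤ)) % (2*(m:ℤ)) = ((2*m - k : ℕ):ℤ) := by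
      rw [he, Int.add_mul_emod_self_left, Int.emod_eq_of_lt (by positivity) (by omega)]
    have h2 : (-(k:ℤ)) / (2*(m:ℤ)) = -1 := by
      rw [he, Int.add_mul_ediv_left _ _ hmne,
        Int.ediv_eq_zero_of_lt (by positivity) (by omega)]
      ring
    simp only [omegaD, h1, h2]
    split_ifs <;> omega

lemma aD_sum_omega {k : ℕ} (hk : k ≤ m) (hm : 1 ≤ m) (x : Fin (2*m)) :
    ((omegaD m (k:ℤ) x + omegaD m (-(k:ℤ)) x : ℤ) : ℝ) = 2 * aD m k x := by
  have hx := x.isLt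
  rw [omegaD_of_lt (by omega) x, omegaD_of_neg (by omega) x]
  unfold aD
  split_ifs <;> first | (exfalso; omega) | norm_num

lemma aD_add_rev {k : ℕ} (hk : k ≤ m) (x : Fin (2*m)) :
    aD m k x + aD m k x.rev = 0 := by
  have hx := x.isLt
  have hr := Fin.val_rev x
  unfold aD
  split_ifs <;> first | (exfalso; omega) | norm_num

lemma nuD_eq {k : ℕ} (hm : 1 ≤ m) (hk : k ≤ m) (t : VecZ m) (σ : Equiv.Perm (Fin (2*m)))
    (l : Fin (2*m)) :
    nuD m t σ (k:ℤ) l = (t l : ℝ) + aD m k (σ⁻¹ l) - aD m k l := by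
  have h1 := aD_sum_omega hk hm (σ⁻¹ l)
  have h2 := aD_sum_omega hk hm l
  unfold nuD muD
  push_cast at h1 h2 ⊢
  linarith

lemma perm_rev {σ : Equiv.Perm (Fin (2*m))} (hσ : ∀ j, σ j.rev = (σ j).rev)
    (l : Fin (2*m)) : σ⁻¹ l.rev = (σ⁻¹ l).rev := by
  apply σ.injective
  rw [show σ (σ⁻¹ l.rev) = l.rev from σ.apply_symm_apply _, hσ, show σ (σ⁻¹ l) = l from σ.apply_symm_apply _]

lemma omega_neg_add_rev {k : ℕ} (hk : k ≤ m) (hm : 1 ≤ m) (x : Fin (2*m)) :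
    omegaD m (-(k:ℤ)) x + omegaD m (k:ℤ) x.rev = 0 := by
  have hx := x.isLt
  have hr := Fin.val_rev x
  rw [omegaD_of_lt (by omega), omegaD_of_neg (by omega)]
  split_ifs <;> omega

lemma omega_pair_bound {k : ℕ} (hk : k ≤ m) (hm : 1 ≤ m) (x : Fin (2*m)) :
    -1 ≤ omegaD m (k:ℤ) x + omegaD m (k:ℤ) x.rev ∧
      omegaD m (k:ℤ) x + omegaD m (k:ℤ) x.rev ≤ 0 := by
  have hx := x.isLt
  have hr := Fin.val_rev x
  rw [omegaD_of_lt (by omega), omegaD_of_lt (by omega)]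
  split_ifs <;> omega

lemma muQ_add_rev {q : ℕ} (hq : q ≤ m) (x : Fin (2*m)) :
    muQ m q x + muQ m q x.rev = 2 := by
  have hx := x.isLt
  have hr := Fin.val_rev x
  unfold muQ
  split_ifs <;> omega

lemma corootD_rev (i j x : Fin (2*m)) : corootD m i j x.rev = - corootD m i j x := by
  have e : ∀ a b : Fin (2*m), a.rev = b ↔ a = b.rev := fun a b =>
    ⟨fun h => by rw [← h, Fin.rev_rev], fun h => by rw [h, Fin.rev_rev]⟩
  simp only [corootD, e, Fin.rev_rev]
  split_ifs <;> omega

lemma aD_of_memA {k : ℕ} (hk : k ≤ m) {x : Fin (2*m)} (h : memA m k x) :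
    aD m k x = -(1/2) ∨ aD m k x = 1/2 := by
  have hx := x.isLt
  unfold memA at h
  unfold aD
  split_ifs with h1 h2
  · left; rfl
  · exfalso; omega
  · right; rfl

lemma aD_of_not_memA {k : ℕ} (hk : k ≤ m) {x : Fin (2*m)} (h : ¬ memA m k x) :
    aD m k x = 0 := by
  have hx := x.isLt
  unfold memA at h
  unfold aD
  split_ifs with h1 h2
  · exfalso; omega
  · rfl
  · exfalso; omega

lemma card_filter_lt {a : ℕ} (ha : a ≤ 2*m) :
    (Finset.univ.filter (fun l : Fin (2*m) => (l:ℕ) < a)).card = a := by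
  have h : (Finset.univ.filter (fun l : Fin (2*m) => (l:ℕ) < a)).card
      = (Finset.range a).card := by
    apply Finset.card_bij (fun (l : Fin (2*m)) _ => (l:ℕ))
    · intro x hx
      simp only [Finset.mem_filter, Finset.mem_univ, true_and] at hx
      simp [Finset.mem_range, hx]
    · intro x _ y _ h
      exact Fin.ext h
    · intro b hb
      simp only [Finset.mem_range] at hb
      refine ⟨⟨b, by omega⟩, ?_, rfl⟩
      simp only [Finset.mem_filter, Finset.mem_univ, true_and]
      exact hb
  rw [h, Finset.card_range]

lemma sum_boole_int {s : Finset (Fin (2*m))} {p : Fin (2*m) → Prop} [DecidablePred p] :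
    (∑ l ∈ s, (if p l then (1:ℤ) else 0)) = ((s.filter p).card : ℤ) := by
  rw [Finset.card_filter]
  push_cast
  rfl

lemma coroot_sum (i j : Fin (2*m)) :
    (∑ l ∈ Finset.univ.filter (fun l : Fin (2*m) => (l:ℕ) < m), corootD m i j l) % 2 = 0 := by
  unfold corootD
  rw [Finset.sum_sub_distrib, Finset.sum_add_distrib, Finset.sum_sub_distrib,
    Finset.sum_ite_eq', Finset.sum_ite_eq', Finset.sum_ite_eq', Finset.sum_ite_eq']
  simp only [Finset.mem_filter, Finset.mem_univ, true_and]
  have h1 := Fin.val_rev i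
  have h2 := Fin.val_rev j
  have hi := i.isLt
  have hj := j.isLt
  split_ifs <;> omega

lemma parity_lemma (m : ℕ) (N : Fin (2*m) → ℤ)
    (hsum : ∀ l, N l + N l.rev = 2) (hbd : ∀ l, 0 ≤ N l ∧ N l ≤ 2) :
    ((∑ l ∈ Finset.univ.filter (fun l : Fin (2*m) => (l:ℕ) < m), N l)
      + ((Finset.univ.filter (fun l : Fin (2*m) => N l = 2)).card : ℤ) + (m:ℤ)) % 2 = 0 := by
  classical
  have hcard : ((Finset.univ.filter (fun l : Fin (2*m) => N l = 2)).card : ℤ)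
      = ∑ l ∈ Finset.univ.filter (fun l : Fin (2*m) => (l:ℕ) < m),
          ((if N l = 2 then (1:ℤ) else 0) + (if N l.rev = 2 then 1 else 0)) := by
    rw [← sum_boole_int,
      ← Finset.sum_filter_add_sum_filter_not Finset.univ (fun l : Fin (2*m) => (l:ℕ) < m)
        (fun l => if N l = 2 then (1:ℤ) else 0),
      Finset.sum_add_distrib]
    congr 1
    refine Finset.sum_nbij' (fun l => Fin.rev l) (fun l => Fin.rev l) ?_ ?_ ?_ ?_ ?_
    · intro a ha
      simp only [Finset.mem_filter, Finset.mem_univ, true_and, not_lt] at ha ⊢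
      have := Fin.val_rev a
      have := a.isLt
      omega
    · intro a ha
      simp only [Finset.mem_filter, Finset.mem_univ, true_and, not_lt] at ha ⊢
      have := Fin.val_rev a
      have := a.isLt
      omega
    · intro a _; exact Fin.rev_rev a
    · intro a _; exact Fin.rev_rev a
    · intro a _; rw [Fin.rev_rev]
  have hm' : (m:ℤ) = ∑ _l ∈ Finset.univ.filter (fun l : Fin (2*m) => (l:ℕ) < m), (1:ℤ) := by
    rw [Finset.sum_const, card_filter_lt (by omega)]
    simp
  rw [hcard, hm', ← Finset.sum_add_distrib, ← Finset.sum_add_distrib]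
  have hz : ∀ l ∈ Finset.univ.filter (fun l : Fin (2*m) => (l:ℕ) < m),
      (N l + ((if N l = 2 then (1:ℤ) else 0) + (if N l.rev = 2 then 1 else 0)) + 1) % 2 = 0 := by
    intro l _
    have h1 := hsum l
    have h2 := hbd l
    have h3 := hbd l.rev
    split_ifs <;> omega
  rw [Finset.sum_int_mod, Finset.sum_congr rfl hz, Finset.sum_const_zero]
  rfl

lemma muQ_sum {q : ℕ} (hq : q < m) :
    (∑ l ∈ Finset.univ.filter (fun l : Fin (2*m) => (l:ℕ) < m), muQ m q l) = (m:ℤ) + q := by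
  have h1 : ∀ l ∈ Finset.univ.filter (fun l : Fin (2*m) => (l:ℕ) < m),
      muQ m q l = 1 + (if ((l:ℕ) < q) then (1:ℤ) else 0) := by
    intro l hl
    simp only [Finset.mem_filter, Finset.mem_univ, true_and] at hl
    unfold muQ
    split_ifs <;> omega
  rw [Finset.sum_congr rfl h1, Finset.sum_add_distrib, Finset.sum_const, sum_boole_int]
  have h2 : ((Finset.univ.filter (fun l : Fin (2*m) => (l:ℕ) < m)).filter
      (fun l : Fin (2*m) => (l:ℕ) < q)) = Finset.univ.filter (fun l : Fin (2*m) => (l:ℕ) < q) := by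
    ext l
    simp only [Finset.mem_filter, Finset.mem_univ, true_and]
    omega
  rw [h2, card_filter_lt (by omega), card_filter_lt (by omega)]
  simp

end Helpers

theorem statement15 (m q : ℕ) (hm : 2 ≤ m) (hq : q ≤ m - 1)
    (t : VecZ m) (σ : Equiv.Perm (Fin (2 * m))) (ht : InXD m t) (hσ : InSO m σ)
    (i j : Fin (2 * m)) (hji : j ≠ i) (hjir : j ≠ i.rev) (d : ℤ)
    (t' : VecZ m) (σ' : Equiv.Perm (Fin (2 * m))) (ht' : InXD m t') (hσ' : InSO m σ')
    (hrefl : IsReflOf m i j d t σ t' σ')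
    (k : ℕ) (hk : k ≤ m)
    (hw1 : SP1' m t σ (k : ℤ)) (hw3 : SP3' m q t σ k)
    (hs1 : SP1' m t' σ' (k : ℤ)) (hs3 : ¬ SP3' m q t' σ' k)
    (hint : IsIntVal (aD m k i - aD m k j - (d : ℝ))) :
    (∀ l, IsIntVal (nuD m t σ (k : ℤ) l)) ∧
    (aD m k i - aD m k j - (d : ℝ) = 1 ∨ aD m k i - aD m k j - (d : ℝ) = -1) ∧
    nuD m t σ (k : ℤ) i = 1 ∧ nuD m t σ (k : ℤ) j = 1 ∧
    cD m t σ (k : ℤ) % 2 ≠ q % 2 := by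
  classical
  have hm1 : 1 ≤ m := by omega
  have hkm : k ≤ m := hk
  -- distinctness
  have hij : i ≠ j := hji.symm
  have hijr : i ≠ j.rev := by
    intro h; exact hjir (by rw [h, Fin.rev_rev])
  have hii : i ≠ i.rev := Ne.symm (rev_ne_self i)
  have hjj : j ≠ j.rev := Ne.symm (rev_ne_self j)
  -- coroot values
  have hci : corootD m i j i = 1 := by
    unfold corootD; rw [if_pos rfl, if_neg hij, if_neg hijr, if_neg hii]; norm_num
  have hcj : corootD m i j j = -1 := by
    unfold corootD; rw [if_neg hji, if_pos rfl, if_neg hjj, if_neg hjir]; norm_num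
  have hczero : ∀ l : Fin (2*m), l ≠ i → l ≠ j → l ≠ j.rev → l ≠ i.rev →
      corootD m i j l = 0 := by
    intro l h1 h2 h3 h4
    unfold corootD; rw [if_neg h1, if_neg h2, if_neg h3, if_neg h4]; norm_num
  -- bridges
  have hνw : ∀ l, nuD m t σ (k:ℤ) l = (t l : ℝ) + aD m k (σ⁻¹ l) - aD m k l :=
    nuD_eq hm1 hkm t σ
  have hνw' : ∀ l, nuD m t' σ' (k:ℤ) l = (t' l : ℝ) + aD m k (σ'⁻¹ l) - aD m k l :=
    nuD_eq hm1 hkm t' σ'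
  have hact : ∀ l, actR m t σ (aD m k) l = nuD m t σ (k:ℤ) l + aD m k l := by
    intro l; rw [hνw l]; unfold actR; ring
  have hact' : ∀ l, actR m t' σ' (aD m k) l = nuD m t' σ' (k:ℤ) l + aD m k l := by
    intro l; rw [hνw' l]; unfold actR; ring
  have hap : InApartR m (aD m k) := by
    intro l l'; rw [aD_add_rev hkm, aD_add_rev hkm]
  obtain ⟨z, hz⟩ := hint
  -- reflection relation over ℝ
  have hrelR : ∀ l, nuD m t' σ' (k:ℤ) l
      = nuD m t σ (k:ℤ) l
        - (nuD m t σ (k:ℤ) i - nuD m t σ (k:ℤ) j + (z:ℝ)) * (corootD m i j l : ℝ) := by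
    intro l
    have h := hrefl (aD m k) hap l
    rw [hact' l, hact l, hact i, hact j] at h
    have hco : (nuD m t σ (k:ℤ) i + aD m k i) - (nuD m t σ (k:ℤ) j + aD m k j) - (d:ℝ)
        = nuD m t σ (k:ℤ) i - nuD m t σ (k:ℤ) j + (z:ℝ) := by
      rw [← hz]; ring
    rw [hco] at h
    linarith [h]
  -- unpack hs3
  unfold SP3' at hs3
  push_neg at hs3
  obtain ⟨⟨hint', hncong'⟩, hnopair⟩ := hs3
  simp only [IsIntVal] at hint'
  choose N' hN' using hint'
  -- integrality of ν_k^w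
  have hIi : nuD m t σ (k:ℤ) i = ((N' j : ℤ) : ℝ) - (z:ℝ) := by
    have h := hrelR j
    rw [hN' j, hcj] at h
    push_cast at h
    linarith
  have hIj : nuD m t σ (k:ℤ) j = ((N' i : ℤ) : ℝ) + (z:ℝ) := by
    have h := hrelR i
    rw [hN' i, hci] at h
    push_cast at h
    linarith
  have hIrev : ∀ l, nuD m t σ (k:ℤ) l.rev = 2 - nuD m t σ (k:ℤ) l := by
    intro l; have := hw1.1 l; linarith
  have hint_all : ∀ l, IsIntVal (nuD m t σ (k:ℤ) l) := by
    intro l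
    by_cases h1 : l = i
    · exact ⟨N' j - z, by rw [h1, hIi]; push_cast; ring⟩
    by_cases h2 : l = j
    · exact ⟨N' i + z, by rw [h2, hIj]; push_cast; ring⟩
    by_cases h3 : l = i.rev
    · exact ⟨2 - (N' j - z), by rw [h3, hIrev i, hIi]; push_cast; ring⟩
    by_cases h4 : l = j.rev
    · exact ⟨2 - (N' i + z), by rw [h4, hIrev j, hIj]; push_cast; ring⟩
    · refine ⟨N' l, ?_⟩
      have h := hrelR l
      rw [hczero l h1 h2 h4 h3, hN' l] at h
      push_cast at h
      linarith
  have hint_all' : ∀ l, ∃ zz : ℤ, nuD m t σ (k:ℤ) l = (zz:ℝ) := hint_all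
  choose N hN using hint_all'
  -- integer facts
  have hbZ : ∀ l, 0 ≤ N l ∧ N l ≤ 2 := by
    intro l; have h := hw1.2 l; rw [hN l] at h; exact_mod_cast h
  have hbZ' : ∀ l, 0 ≤ N' l ∧ N' l ≤ 2 := by
    intro l; have h := hs1.2 l; rw [hN' l] at h; exact_mod_cast h
  have hsZ : ∀ l, N l + N l.rev = 2 := by
    intro l; have h := hw1.1 l; rw [hN l, hN l.rev] at h; exact_mod_cast h
  have hrelZ : ∀ l, N' l = N l - (N i - N j + z) * corootD m i j l := by
    intro l
    have h := hrelR l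
    rw [hN' l, hN l, hN i, hN j] at h
    exact_mod_cast h
  -- transfer of NuCongQvee
  have htrans : NuCongQvee m q t σ (k:ℤ) → NuCongQvee m q t' σ' (k:ℤ) := by
    rintro ⟨y, hy, hyeq⟩
    obtain ⟨hy1, hy2⟩ := hy
    refine ⟨fun l => y l - (N i - N j + z) * corootD m i j l, ⟨?_, ?_⟩, ?_⟩
    · intro l
      have h := hy1 l
      have hcr := corootD_rev i j l
      dsimp only
      linear_combination h - (N i - N j + z) * hcr
    · dsimp only
      rw [Finset.sum_sub_distrib, ← Finset.mul_sum]
      have hc2 := coroot_sum i j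
      obtain ⟨e, he⟩ : ∃ e, (∑ l ∈ Finset.univ.filter (fun l : Fin (2*m) => (l:ℕ) < m),
          corootD m i j l) = 2*e :=
        ⟨(∑ l ∈ Finset.univ.filter (fun l : Fin (2*m) => (l:ℕ) < m), corootD m i j l)/2,
          by omega⟩
      rw [he]
      obtain ⟨s, hs⟩ := hy2
      exact ⟨s - (N i - N j + z) * e, by rw [hs]; ring⟩
    · intro l
      have e1 := hrelR l
      have e2 := hyeq l
      have e3 := hN i
      have e4 := hN j
      push_cast at e2 ⊢
      linear_combination e1 + e2 - ((corootD m i j l : ℝ)) * e3 + ((corootD m i j l : ℝ)) * e4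
  have hncong : ¬ NuCongQvee m q t σ (k:ℤ) := fun h => hncong' (htrans h)
  obtain ⟨j₁, j₂, hA1, hB2, hv1, hv2⟩ := hw3 ⟨hint_all, hncong⟩
  have hNj₁ : N j₁ = 1 := by
    have h := hv1; rw [hN j₁] at h; exact_mod_cast h
  have hNj₂ : N j₂ = 1 := by
    have h := hv2; rw [hN j₂] at h; exact_mod_cast h
  have hmemArev : ∀ x : Fin (2*m), memA m k x.rev ↔ memA m k x := by
    intro x
    have h1 := x.isLt
    have h2 := Fin.val_rev x
    unfold memA
    omega
  have hmemBA : ∀ x : Fin (2*m), memB m k x ↔ ¬ memA m k x := by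
    intro x; unfold memA memB; omega
  -- N' values at i, j
  have hNi' : N' i = N j - z := by
    have h := hrelZ i; rw [hci, mul_one] at h; omega
  have hNj' : N' j = N i + z := by
    have h := hrelZ j; rw [hcj] at h
    have h2 : (N i - N j + z) * (-1) = -(N i - N j + z) := by ring
    rw [h2] at h; omega
  -- key case analysis
  have hkey : (z = 1 ∨ z = -1) ∧ N i = 1 ∧ N j = 1 := by
    by_cases hAi : memA m k i
    · by_cases hAj : memA m k j
      · -- both in A_k
        have hBn : ¬ memA m k j₂ := (hmemBA j₂).mp hB2
        have hne1 : j₂ ≠ i := fun h => hBn (h ▸ hAi)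
        have hne2 : j₂ ≠ j := fun h => hBn (h ▸ hAj)
        have hne3 : j₂ ≠ j.rev := fun h => hBn (h ▸ ((hmemArev j).mpr hAj))
        have hne4 : j₂ ≠ i.rev := fun h => hBn (h ▸ ((hmemArev i).mpr hAi))
        have hv2' : nuD m t' σ' (k:ℤ) j₂ = 1 := by
          rw [hrelR j₂, hczero j₂ hne1 hne2 hne3 hne4, hv2]; push_cast; ring
        have hni : nuD m t' σ' (k:ℤ) i ≠ 1 := fun hcon => hnopair i j₂ hAi hB2 hcon hv2'
        have hnj : nuD m t' σ' (k:ℤ) j ≠ 1 := fun hcon => hnopair j j₂ hAj hB2 hcon hv2'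
        have hNi1 : N' i ≠ 1 := fun h => hni (by rw [hN' i, h]; norm_num)
        have hNj1 : N' j ≠ 1 := fun h => hnj (by rw [hN' j, h]; norm_num)
        have haorb : N i = 1 ∨ N j = 1 := by
          by_cases e1 : j₁ = i
          · left; rw [← e1]; exact hNj₁
          by_cases e2 : j₁ = j
          · right; rw [← e2]; exact hNj₁
          by_cases e3 : j₁ = j.rev
          · right; have hs := hsZ j; rw [e3] at hNj₁; omega
          by_cases e4 : j₁ = i.rev
          · left; have hs := hsZ i; rw [e4] at hNj₁; omega
          · exfalso
            have hv1' : nuD m t' σ' (k:ℤ) j₁ = 1 := by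
              rw [hrelR j₁, hczero j₁ e1 e2 e3 e4, hv1]; push_cast; ring
            exact hnopair j₁ j₂ hA1 hB2 hv1' hv2'
        have hb1 := hbZ i; have hb2 := hbZ j
        have hb3 := hbZ' i; have hb4 := hbZ' j
        omega
      · -- mixed: impossible
        exfalso
        have h2 := aD_of_not_memA hkm hAj
        rcases aD_of_memA hkm hAi with h1 | h1
        · rw [h1, h2] at hz
          have h3 : ((2*z + 2*d : ℤ):ℝ) = -1 := by push_cast; linarith
          have h4 : (2*z + 2*d : ℤ) = -1 := by exact_mod_cast h3
          omega
        · rw [h1, h2] at hz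
          have h3 : ((2*z + 2*d : ℤ):ℝ) = 1 := by push_cast; linarith
          have h4 : (2*z + 2*d : ℤ) = 1 := by exact_mod_cast h3
          omega
    · by_cases hAj : memA m k j
      · -- mixed: impossible
        exfalso
        have h2 := aD_of_not_memA hkm hAi
        rcases aD_of_memA hkm hAj with h1 | h1
        · rw [h1, h2] at hz
          have h3 : ((2*z + 2*d : ℤ):ℝ) = 1 := by push_cast; linarith
          have h4 : (2*z + 2*d : ℤ) = 1 := by exact_mod_cast h3
          omega
        · rw [h1, h2] at hz
          have h3 : ((2*z + 2*d : ℤ):ℝ) = -1 := by push_cast; linarith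
          have h4 : (2*z + 2*d : ℤ) = -1 := by exact_mod_cast h3
          omega
      · -- both in B_k
        have hBi : memB m k i := (hmemBA i).mpr hAi
        have hBj : memB m k j := (hmemBA j).mpr hAj
        have hne1 : j₁ ≠ i := fun h => hAi (h ▸ hA1)
        have hne2 : j₁ ≠ j := fun h => hAj (h ▸ hA1)
        have hne3 : j₁ ≠ j.rev := fun h => hAj ((hmemArev j).mp (h ▸ hA1))
        have hne4 : j₁ ≠ i.rev := fun h => hAi ((hmemArev i).mp (h ▸ hA1))
        have hv1' : nuD m t' σ' (k:ℤ) j₁ = 1 := by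
          rw [hrelR j₁, hczero j₁ hne1 hne2 hne3 hne4, hv1]; push_cast; ring
        have hni : nuD m t' σ' (k:ℤ) i ≠ 1 := fun hcon => hnopair j₁ i hA1 hBi hv1' hcon
        have hnj : nuD m t' σ' (k:ℤ) j ≠ 1 := fun hcon => hnopair j₁ j hA1 hBj hv1' hcon
        have hNi1 : N' i ≠ 1 := fun h => hni (by rw [hN' i, h]; norm_num)
        have hNj1 : N' j ≠ 1 := fun h => hnj (by rw [hN' j, h]; norm_num)
        have haorb : N i = 1 ∨ N j = 1 := by
          by_cases e1 : j₂ = i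
          · left; rw [← e1]; exact hNj₂
          by_cases e2 : j₂ = j
          · right; rw [← e2]; exact hNj₂
          by_cases e3 : j₂ = j.rev
          · right; have hs := hsZ j; rw [e3] at hNj₂; omega
          by_cases e4 : j₂ = i.rev
          · left; have hs := hsZ i; rw [e4] at hNj₂; omega
          · exfalso
            have hv2' : nuD m t' σ' (k:ℤ) j₂ = 1 := by
              rw [hrelR j₂, hczero j₂ e1 e2 e3 e4, hv2]; push_cast; ring
            exact hnopair j₁ j₂ hA1 hB2 hv1' hv2'
        have hb1 := hbZ i; have hb2 := hbZ j
        have hb3 := hbZ' i; have hb4 := hbZ' j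
        omega
  obtain ⟨hz1, hNi1, hNj1⟩ := hkey
  -- μ_k^w = ν_k^w
  have hT : ∀ l : Fin (2*m), t l + t l.rev = 2 := by
    intro l
    have h := hw1.1 l
    rw [hνw l, hνw l.rev, perm_rev hσ.2 l] at h
    have h1 := aD_add_rev hkm (σ⁻¹ l)
    have h2 := aD_add_rev hkm l
    have h3 : ((t l + t l.rev : ℤ) : ℝ) = 2 := by push_cast; linarith
    exact_mod_cast h3
  have hmuN : ∀ l, muD m t σ (k:ℤ) l = N l := by
    intro l
    have hb1 := omega_pair_bound hkm hm1 (σ⁻¹ l)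
    have hb2 := omega_pair_bound hkm hm1 l
    have e1 : muD m t σ (-(k:ℤ)) l + muD m t σ (k:ℤ) l.rev = 2 := by
      unfold muD
      rw [perm_rev hσ.2 l]
      have c1 := omega_neg_add_rev hkm hm1 (σ⁻¹ l)
      have c2 := omega_neg_add_rev hkm hm1 l
      have c3 := hT l
      omega
    have e2 : muD m t σ (k:ℤ) l + muD m t σ (-(k:ℤ)) l = 2 * N l := by
      have h := hN l
      unfold nuD at h
      have h2 : ((muD m t σ (k:ℤ) l + muD m t σ (-(k:ℤ)) l : ℤ):ℝ) = ((2 * N l : ℤ):ℝ) := by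
        push_cast at h ⊢; linarith
      exact_mod_cast h2
    have e3 : muD m t σ (k:ℤ) l.rev + muD m t σ (-(k:ℤ)) l.rev = 2 * N l.rev := by
      have h := hN l.rev
      unfold nuD at h
      have h2 : ((muD m t σ (k:ℤ) l.rev + muD m t σ (-(k:ℤ)) l.rev : ℤ):ℝ)
          = ((2 * N l.rev : ℤ):ℝ) := by
        push_cast at h ⊢; linarith
      exact_mod_cast h2
    have e5 : muD m t σ (k:ℤ) l + muD m t σ (k:ℤ) l.rev
        = (t l + t l.rev) + (omegaD m (k:ℤ) (σ⁻¹ l) + omegaD m (k:ℤ) (σ⁻¹ l).rev)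
          - (omegaD m (k:ℤ) l + omegaD m (k:ℤ) l.rev) := by
      unfold muD
      rw [perm_rev hσ.2 l]
      ring
    have c3 := hT l
    have c4 := hsZ l
    omega
  -- cD in terms of N
  have hcd : cD m t σ (k:ℤ) = (Finset.univ.filter (fun l : Fin (2*m) => N l = 2)).card := by
    unfold cD
    have hset : {j : Fin (2*m) | muD m t σ (k:ℤ) j = 2}
        = ↑(Finset.univ.filter (fun l : Fin (2*m) => N l = 2)) := by
      ext l
      simp [hmuN l]
    rw [hset, Set.ncard_coe_finset]
  have hfinal : cD m t σ (k:ℤ) % 2 ≠ q % 2 := by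
    intro hcon
    apply hncong
    refine ⟨fun l => N l - muQ m q l, ⟨?_, ?_⟩, ?_⟩
    · intro l
      have h1 := hsZ l
      have h2 := muQ_add_rev (show q ≤ m by omega) l
      dsimp only
      omega
    · dsimp only
      have hp := parity_lemma m N hsZ hbZ
      have hmq := muQ_sum (m := m) (show q < m by omega)
      rw [Finset.sum_sub_distrib, hmq, Int.even_iff]
      rw [hcd] at hcon
      omega
    · intro l
      rw [hN l]
      push_cast
      ring
  refine ⟨hint_all, ?_, ?_, ?_, hfinal⟩
  · rw [hz]
    rcases hz1 with h | h
    · left; exact_mod_cast h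
    · right; exact_mod_cast h
  · rw [hN i, hNi1]; norm_num
  · rw [hN j, hNj1]; norm_num

end TypeD
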